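/- Under the attributed Erdős–Rényi graph pair model G(n,p,s_u; m,q,s_a) with q = o(1), s_a = Θ(1), and m q s_a² ≥ 2 log n / (τ log(1/q)) for a constant τ > 0, let S2 = {(i,j) : C_ij > z} with z = (1+τ) m q s_a². Then with probability tending to 1 as n → ∞, every pair (i,j) ∈ S2 satisfies j = Π*(i); in particular, with probability tending to 1 no two distinct pairs in S2 share a coordinate. -/

import Mathlib

open MeasureTheory ProbabilityTheory Filter Finset

noncomputable section

namespace AttrAlign

/-- The Bernoulli measure on `Bool` with success probability `r` (clamped to `[0,1]`). -/
def bern (r : ℝ) : Measure Bool :=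
  (PMF.bernoulli (min (Real.toNNReal r) 1) (min_le_right _ _)).toMeasure

/-- The uniform measure on a finite type (the zero measure if the type is empty). -/
def uniformMeasure (α : Type*) [Fintype α] [MeasurableSpace α] : Measure α := by
  classical
  exact if h : Nonempty α then (@PMF.uniformOfFintype α _ h).toMeasure else 0

instance permMeasurableSpace (n : ℕ) : MeasurableSpace (Equiv.Perm (Fin n)) := ⊤

/-- Sample space for the attributed Erdős–Rényi graph pair model `G(n,p,s_u; m,q,s_a)`:
base user–user edge indicators, base user–attribute edge indicators, the two subsampling
indicator families for `G₁`, the two subsampling indicator families for `G₂`, and the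
anonymizing permutation `Π*`.  Only the entries with `i < j` of the user–user indicator
matrices are used. -/
abbrev Config (n m : ℕ) :=
  (Fin n → Fin n → Bool) × (Fin n → Fin m → Bool) ×
    (Fin n → Fin n → Bool) × (Fin n → Fin m → Bool) ×
    (Fin n → Fin n → Bool) × (Fin n → Fin m → Bool) × Equiv.Perm (Fin n)

/-- i.i.d. `Bern(r)` measure on a `k × l` matrix of Booleans. -/
def edgeMeasure (k l : ℕ) (r : ℝ) : Measure (Fin k → Fin l → Bool) :=
  Measure.pi fun _ => Measure.pi fun _ => bern r

/-- The law of the attributed Erdős–Rényi graph pair model `G(n,p,s_u; m,q,s_a)`: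
all edge indicators are independent, base user–user edges are `Bern(p)`, base
user–attribute edges are `Bern(q)`, the user–user subsampling indicators are `Bern(s_u)`,
the user–attribute subsampling indicators are `Bern(s_a)`, and the permutation `Π*` is
uniform. -/
def attrMeasure (n m : ℕ) (p q su sa : ℝ) : Measure (Config n m) :=
  (edgeMeasure n n p).prod ((edgeMeasure n m q).prod ((edgeMeasure n n su).prod
    ((edgeMeasure n m sa).prod ((edgeMeasure n n su).prod
      ((edgeMeasure n m sa).prod (uniformMeasure (Equiv.Perm (Fin n))))))))

variable {n m : ℕ}

def uu0 (ω : Config n m) : Fin n → Fin n → Bool := ω.1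
def ua0 (ω : Config n m) : Fin n → Fin m → Bool := ω.2.1
def suG1 (ω : Config n m) : Fin n → Fin n → Bool := ω.2.2.1
def saG1 (ω : Config n m) : Fin n → Fin m → Bool := ω.2.2.2.1
def suG2 (ω : Config n m) : Fin n → Fin n → Bool := ω.2.2.2.2.1
def saG2 (ω : Config n m) : Fin n → Fin m → Bool := ω.2.2.2.2.2.1
/-- The true permutation `Π*`. -/
def pstar (ω : Config n m) : Equiv.Perm (Fin n) := ω.2.2.2.2.2.2

/-- Symmetrized edge indicator on unordered pairs of users (no self loops). -/
def symEdge {k : ℕ} (f : Fin k → Fin k → Bool) (i j : Fin k) : Bool :=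
  if i < j then f i j else if j < i then f j i else false

/-- Adjacency of users `i` and `j` in `G₁`. -/
def G1uu (ω : Config n m) (i j : Fin n) : Bool :=
  symEdge (fun a b => uu0 ω a b && suG1 ω a b) i j

/-- Adjacency of users `i` and `j` in `G₂`. -/
def G2uu (ω : Config n m) (i j : Fin n) : Bool :=
  symEdge (fun a b => uu0 ω a b && suG2 ω a b) i j

/-- Adjacency of users `i` and `j` in the anonymized graph `G₂'`, obtained by applying
`Π*` to the users of `G₂`. -/
def G2puu (ω : Config n m) (i j : Fin n) : Bool :=
  G2uu ω ((pstar ω).symm i) ((pstar ω).symm j)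

/-- Adjacency of user `i` and attribute `a` in `G₁`. -/
def G1ua (ω : Config n m) (i : Fin n) (a : Fin m) : Bool := ua0 ω i a && saG1 ω i a

/-- Adjacency of user `i` and attribute `a` in `G₂`. -/
def G2ua (ω : Config n m) (i : Fin n) (a : Fin m) : Bool := ua0 ω i a && saG2 ω i a

/-- Adjacency of user `j` and attribute `a` in the anonymized graph `G₂'`. -/
def G2pua (ω : Config n m) (j : Fin n) (a : Fin m) : Bool :=
  G2ua ω ((pstar ω).symm j) a

/-- `C i j`: the number of attributes adjacent to user `i` in `G₁` and to user `j` in `G₂'`. -/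
def CC (ω : Config n m) (i j : Fin n) : ℕ :=
  (univ.filter fun a : Fin m => G1ua ω i a = true ∧ G2pua ω j a = true).card

/-- The anchor set `{(i,j) : C_ij > x}`. -/
def anchors (x : ℝ) (ω : Config n m) : Finset (Fin n × Fin n) := by
  classical exact univ.filter fun ij : Fin n × Fin n => x < (CC ω ij.1 ij.2 : ℝ)

/-- No two distinct pairs of `S` share a coordinate. -/
def noConflict {k : ℕ} (S : Finset (Fin k × Fin k)) : Prop :=
  ∀ a ∈ S, ∀ b ∈ S, (a.1 = b.1 ∨ a.2 = b.2) → a = b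

/-- Users of `G₁` not matched by the anchor set `S`. -/
def unmatched1 (S : Finset (Fin n × Fin n)) : Finset (Fin n) := by
  classical exact univ.filter fun i : Fin n => ∀ j, (i, j) ∉ S

/-- Users of `G₂'` not matched by the anchor set `S`. -/
def unmatched2 (S : Finset (Fin n × Fin n)) : Finset (Fin n) := by
  classical exact univ.filter fun j : Fin n => ∀ i, (i, j) ∉ S

/-- `W i j`: the number of pairs `(k,l) ∈ S` with `k` adjacent to `i` in `G₁` and
`l` adjacent to `j` in `G₂'`. -/
def W (ω : Config n m) (S : Finset (Fin n × Fin n)) (i j : Fin n) : ℕ := by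
  classical
  exact (S.filter fun kl : Fin n × Fin n =>
    G1uu ω i kl.1 = true ∧ G2puu ω j kl.2 = true).card

instance (r : ℝ) : IsProbabilityMeasure (bern r) := by unfold bern; infer_instance
instance (k l : ℕ) (r : ℝ) : IsProbabilityMeasure (edgeMeasure k l r) := by
  unfold edgeMeasure; infer_instance
instance (n : ℕ) : IsProbabilityMeasure (uniformMeasure (Equiv.Perm (Fin n))) := by
  unfold uniformMeasure
  split
  · infer_instance
  · exact absurd (Nonempty.intro (Equiv.refl _)) ‹_›
instance (n m : ℕ) (p q su sa : ℝ) : IsProbabilityMeasure (attrMeasure n m p q su sa) := by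
  unfold attrMeasure; infer_instance

lemma meas_all {α : Type*} [MeasurableSpace α] [MeasurableSingletonClass α] [Countable α]
    (s : Set α) : MeasurableSet s := s.to_countable.measurableSet

lemma bern_true {r : ℝ} (hr0 : 0 ≤ r) (hr1 : r ≤ 1) : bern r {true} = ENNReal.ofReal r := by
  unfold bern
  rw [PMF.toMeasure_apply_singleton _ _ (meas_all _),
    PMF.bernoulli_apply]
  simp only [Bool.cond_true]
  rw [min_eq_left]
  · simp [ENNReal.ofReal]
  · exact_mod_cast Real.toNNReal_le_one.mpr hr1

lemma row_meas {m : ℕ} {r : ℝ} (hr0 : 0 ≤ r) (hr1 : r ≤ 1) (T : Finset (Fin m)) :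
    Measure.pi (fun _ : Fin m => bern r) {g | ∀ a ∈ T, g a = true}
      = ENNReal.ofReal r ^ T.card := by
  have : {g : Fin m → Bool | ∀ a ∈ T, g a = true}
      = Set.pi Set.univ (fun a => if a ∈ T then {true} else Set.univ) := by
    ext g
    simp only [Set.mem_setOf_eq, Set.mem_pi, Set.mem_univ, forall_true_left]
    constructor
    · intro h a; split <;> simp_all
    · intro h a ha; have := h a; simp [ha] at this; exact this
  rw [this, Measure.pi_pi]
  have : ∀ a : Fin m, (bern r) (if a ∈ T then ({true} : Set Bool) else Set.univ)
      = if a ∈ T then ENNReal.ofReal r else 1 := by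
    intro a; split
    · exact bern_true hr0 hr1
    · exact measure_univ
  simp_rw [this]
  rw [Finset.prod_ite_mem, Finset.univ_inter, Finset.prod_const]

lemma prodTwoAux {n : ℕ} (g : Fin n → ENNReal) (i k : Fin n) (hik : i ≠ k)
    (h : ∀ x, x ≠ i → x ≠ k → g x = 1) : ∏ x, g x = g i * g k := by
  classical
  rw [← Finset.mul_prod_erase Finset.univ g (Finset.mem_univ i),
    ← Finset.mul_prod_erase _ g (Finset.mem_erase.mpr ⟨Ne.symm hik, Finset.mem_univ k⟩)]
  rw [Finset.prod_eq_one, mul_one]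
  intro x hx
  simp only [Finset.mem_erase] at hx
  exact h x hx.2.1 hx.1

lemma prodOneAux {n : ℕ} (g : Fin n → ENNReal) (i : Fin n)
    (h : ∀ x, x ≠ i → g x = 1) : ∏ x, g x = g i := by
  classical
  rw [← Finset.mul_prod_erase Finset.univ g (Finset.mem_univ i), Finset.prod_eq_one, mul_one]
  intro x hx
  exact h x (Finset.mem_erase.mp hx).1

lemma edge_two {n m : ℕ} {r : ℝ} (hr0 : 0 ≤ r) (hr1 : r ≤ 1) (i k : Fin n) (hik : i ≠ k)
    (T : Finset (Fin m)) :
    edgeMeasure n m r {f | ∀ a ∈ T, f i a = true ∧ f k a = true}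
      = ENNReal.ofReal r ^ T.card * ENNReal.ofReal r ^ T.card := by
  classical
  have hset : {f : Fin n → Fin m → Bool | ∀ a ∈ T, f i a = true ∧ f k a = true}
      = Set.pi Set.univ (fun x => if x = i then {g | ∀ a ∈ T, g a = true}
          else if x = k then {g | ∀ a ∈ T, g a = true} else Set.univ) := by
    ext f
    simp only [Set.mem_setOf_eq, Set.mem_pi, Set.mem_univ, forall_true_left]
    constructor
    · intro h x
      by_cases h1 : x = i
      · subst h1; simp only [if_pos rfl, Set.mem_setOf_eq]; exact fun a ha => (h a ha).1
      · by_cases h2 : x = k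
        · subst h2
          simp only [if_neg h1, if_pos rfl, Set.mem_setOf_eq]
          exact fun a ha => (h a ha).2
        · simp [h1, h2]
    · intro h a ha
      have hi := h i
      have hk := h k
      rw [if_pos rfl] at hi
      rw [if_neg (Ne.symm hik), if_pos rfl] at hk
      exact ⟨hi a ha, hk a ha⟩
  rw [hset, edgeMeasure, Measure.pi_pi]
  rw [prodTwoAux _ i k hik (by intro x h1 h2; rw [if_neg h1, if_neg h2]; exact measure_univ)]
  rw [if_pos rfl, if_neg (Ne.symm hik), if_pos rfl, row_meas hr0 hr1]

lemma edge_one {n m : ℕ} {r : ℝ} (hr0 : 0 ≤ r) (hr1 : r ≤ 1) (i : Fin n)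
    (T : Finset (Fin m)) :
    edgeMeasure n m r {f | ∀ a ∈ T, f i a = true} = ENNReal.ofReal r ^ T.card := by
  classical
  have hset : {f : Fin n → Fin m → Bool | ∀ a ∈ T, f i a = true}
      = Set.pi Set.univ (fun x => if x = i then {g | ∀ a ∈ T, g a = true} else Set.univ) := by
    ext f
    simp only [Set.mem_setOf_eq, Set.mem_pi, Set.mem_univ, forall_true_left]
    constructor
    · intro h x
      by_cases h1 : x = i
      · subst h1; simp only [if_pos rfl, Set.mem_setOf_eq]; exact h
      · simp [h1]
    · intro h a ha
      have hi := h i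
      rw [if_pos rfl] at hi
      exact hi a ha
  rw [hset, edgeMeasure, Measure.pi_pi]
  rw [prodOneAux _ i (by intro x h1; rw [if_neg h1]; exact measure_univ), if_pos rfl,
    row_meas hr0 hr1]


/-- `D i k`: count of common attributes between user `i` in `G₁` and user `k` in `G₂`
(before anonymization). -/
def D (ω : Config n m) (i k : Fin n) : ℕ :=
  (univ.filter fun a : Fin m =>
    ua0 ω i a = true ∧ ua0 ω k a = true ∧ saG1 ω i a = true ∧ saG2 ω k a = true).card

set_option synthInstance.maxHeartbeats 1000000 in
lemma cyl_meas (p q su sa : ℝ) (hq0 : 0 ≤ q) (hq1 : q ≤ 1) (hsa0 : 0 ≤ sa) (hsa1 : sa ≤ 1)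
    (i k : Fin n) (hik : i ≠ k) (T : Finset (Fin m)) :
    attrMeasure n m p q su sa
      {ω : Config n m | ∀ a ∈ T, ua0 ω i a = true ∧ ua0 ω k a = true ∧
        saG1 ω i a = true ∧ saG2 ω k a = true}
      = (ENNReal.ofReal q * ENNReal.ofReal q * (ENNReal.ofReal sa * ENNReal.ofReal sa))
          ^ T.card := by
  classical
  have hset : {ω : Config n m | ∀ a ∈ T, ua0 ω i a = true ∧ ua0 ω k a = true ∧
        saG1 ω i a = true ∧ saG2 ω k a = true}
      = (Set.univ : Set (Fin n → Fin n → Bool)) ×ˢ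
          (({f | ∀ a ∈ T, f i a = true ∧ f k a = true} : Set (Fin n → Fin m → Bool)) ×ˢ
            ((Set.univ : Set (Fin n → Fin n → Bool)) ×ˢ
              (({f | ∀ a ∈ T, f i a = true} : Set (Fin n → Fin m → Bool)) ×ˢ
                ((Set.univ : Set (Fin n → Fin n → Bool)) ×ˢ
                  (({f | ∀ a ∈ T, f k a = true} : Set (Fin n → Fin m → Bool)) ×ˢ
                    (Set.univ : Set (Equiv.Perm (Fin n)))))))) := by
    ext ω
    obtain ⟨w1, w2, w3, w4, w5, w6, w7⟩ := ω
    simp only [Set.mem_setOf_eq, Set.mem_prod, Set.mem_univ, true_and, and_true]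
    unfold ua0 saG1 saG2
    constructor
    · intro h
      exact ⟨fun a ha => ⟨(h a ha).1, (h a ha).2.1⟩, fun a ha => (h a ha).2.2.1,
        fun a ha => (h a ha).2.2.2⟩
    · intro h a ha
      exact ⟨(h.1 a ha).1, (h.1 a ha).2, h.2.1 a ha, h.2.2 a ha⟩
  rw [hset, attrMeasure, Measure.prod_prod, Measure.prod_prod, Measure.prod_prod,
    Measure.prod_prod, Measure.prod_prod, Measure.prod_prod,
    edge_two hq0 hq1 i k hik T, edge_one hsa0 hsa1 i T, edge_one hsa0 hsa1 k T]
  simp only [measure_univ, one_mul, mul_one]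
  ring

set_option synthInstance.maxHeartbeats 1000000 in
lemma tail_bound (p q su sa : ℝ) (hq0 : 0 ≤ q) (hq1 : q ≤ 1) (hsa0 : 0 ≤ sa) (hsa1 : sa ≤ 1)
    (i k : Fin n) (hik : i ≠ k) (t : ℕ) :
    attrMeasure n m p q su sa {ω : Config n m | t ≤ D ω i k}
      ≤ (m.choose t : ENNReal) *
        (ENNReal.ofReal q * ENNReal.ofReal q * (ENNReal.ofReal sa * ENNReal.ofReal sa)) ^ t := by
  classical
  set c := ENNReal.ofReal q * ENNReal.ofReal q * (ENNReal.ofReal sa * ENNReal.ofReal sa)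
  have hsub : {ω : Config n m | t ≤ D ω i k} ⊆
      ⋃ T ∈ Finset.powersetCard t (univ : Finset (Fin m)),
        {ω : Config n m | ∀ a ∈ T, ua0 ω i a = true ∧ ua0 ω k a = true ∧
          saG1 ω i a = true ∧ saG2 ω k a = true} := by
    intro ω hω
    obtain ⟨T, hTsub, hTcard⟩ := Finset.exists_subset_card_eq hω
    refine Set.mem_iUnion₂.mpr ⟨T, Finset.mem_powersetCard.mpr
      ⟨Finset.subset_univ _, hTcard⟩, ?_⟩
    intro a ha
    have := hTsub ha
    simpa using (Finset.mem_filter.mp this).2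
  calc attrMeasure n m p q su sa {ω : Config n m | t ≤ D ω i k}
      ≤ ∑ T ∈ Finset.powersetCard t (univ : Finset (Fin m)),
          attrMeasure n m p q su sa
            {ω : Config n m | ∀ a ∈ T, ua0 ω i a = true ∧ ua0 ω k a = true ∧
              saG1 ω i a = true ∧ saG2 ω k a = true} :=
        le_trans (measure_mono hsub) (measure_biUnion_finset_le _ _)
    _ = ∑ T ∈ Finset.powersetCard t (univ : Finset (Fin m)), c ^ t := by
        refine Finset.sum_congr rfl fun T hT => ?_
        rw [cyl_meas p q su sa hq0 hq1 hsa0 hsa1 i k hik T,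
          (Finset.mem_powersetCard.mp hT).2]
    _ = (m.choose t : ENNReal) * c ^ t := by
        rw [Finset.sum_const, Finset.card_powersetCard, Finset.card_univ, Fintype.card_fin,
          nsmul_eq_mul]

set_option synthInstance.maxHeartbeats 1000000 in
lemma bad_bound (p q su sa : ℝ) (hq0 : 0 ≤ q) (hq1 : q ≤ 1) (hsa0 : 0 ≤ sa) (hsa1 : sa ≤ 1)
    (t : ℕ) :
    attrMeasure n m p q su sa {ω : Config n m | ∃ i k : Fin n, i ≠ k ∧ t ≤ D ω i k}
      ≤ (n : ENNReal) ^ 2 * ((m.choose t : ENNReal) *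
        (ENNReal.ofReal q * ENNReal.ofReal q * (ENNReal.ofReal sa * ENNReal.ofReal sa)) ^ t) := by
  classical
  set c := (m.choose t : ENNReal) *
    (ENNReal.ofReal q * ENNReal.ofReal q * (ENNReal.ofReal sa * ENNReal.ofReal sa)) ^ t with hc
  have hsub : {ω : Config n m | ∃ i k : Fin n, i ≠ k ∧ t ≤ D ω i k} ⊆
      ⋃ ik ∈ (univ : Finset (Fin n)).offDiag, {ω : Config n m | t ≤ D ω ik.1 ik.2} := by
    rintro ω ⟨i, k, hik, hD⟩
    exact Set.mem_iUnion₂.mpr ⟨(i, k), Finset.mem_offDiag.mpr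
      ⟨Finset.mem_univ _, Finset.mem_univ _, hik⟩, hD⟩
  calc attrMeasure n m p q su sa {ω : Config n m | ∃ i k : Fin n, i ≠ k ∧ t ≤ D ω i k}
      ≤ ∑ ik ∈ (univ : Finset (Fin n)).offDiag,
          attrMeasure n m p q su sa {ω : Config n m | t ≤ D ω ik.1 ik.2} :=
        le_trans (measure_mono hsub) (measure_biUnion_finset_le _ _)
    _ ≤ ∑ _ik ∈ (univ : Finset (Fin n)).offDiag, c := by
        refine Finset.sum_le_sum fun ik hik => ?_
        exact tail_bound p q su sa hq0 hq1 hsa0 hsa1 ik.1 ik.2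
          (Finset.mem_offDiag.mp hik).2.2 t
    _ ≤ (n : ENNReal) ^ 2 * c := by
        rw [Finset.sum_const, nsmul_eq_mul]
        refine mul_le_mul_left ?_ c
        have : ((univ : Finset (Fin n)).offDiag.card : ENNReal) ≤ ((n * n : ℕ) : ENNReal) := by
          refine Nat.cast_le.mpr ?_
          have := Finset.offDiag_card (univ : Finset (Fin n))
          simp only [Finset.card_univ, Fintype.card_fin] at this
          omega
        simpa [pow_two, Nat.cast_mul] using this

lemma compl_sub (q su sa : ℝ) (z : ℝ) (hz0 : 0 ≤ z) (ω : Config n m)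
    (hω : ¬ ∀ i j : Fin n, z < (CC ω i j : ℝ) → j = pstar ω i) :
    ∃ i k : Fin n, i ≠ k ∧ Nat.floor z + 1 ≤ D ω i k := by
  push_neg at hω
  obtain ⟨i, j, hzlt, hne⟩ := hω
  refine ⟨i, (pstar ω).symm j, ?_, ?_⟩
  · intro h
    exact hne (by rw [h]; exact (Equiv.apply_symm_apply _ _).symm)
  · have hCD : CC ω i j = D ω i ((pstar ω).symm j) := by
      unfold CC D G1ua G2pua G2ua
      congr 1
      apply Finset.filter_congr
      intro a _
      simp only [Bool.and_eq_true]
      tauto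
    have : Nat.floor z < CC ω i j := (Nat.floor_lt hz0).mpr hzlt
    omega

lemma chooseBound (M t : ℕ) (x : ℝ) (hx0 : 0 ≤ x) (ht : 1 ≤ t) :
    (M.choose t : ℝ) * x ^ t ≤ (Real.exp 1 * ((M : ℝ) * x) / t) ^ t := by
  rcases lt_or_ge M t with htM | htM
  · rw [Nat.choose_eq_zero_of_lt htM]
    have : (0:ℝ) ≤ (Real.exp 1 * ((M : ℝ) * x) / t) ^ t := by positivity
    simpa using this
  have hM1 : 1 ≤ M := le_trans ht htM
  have htpos : (0:ℝ) < t := by exact_mod_cast ht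
  have hMpos : (0:ℝ) < M := by exact_mod_cast hM1
  rcases eq_or_lt_of_le hx0 with hx | hx
  · rw [← hx]
    have htne : t ≠ 0 := by omega
    simp [zero_pow htne]
  set y : ℝ := t / M with hy
  have hy0 : 0 < y := by positivity
  have key : (M.choose t : ℝ) * y ^ t ≤ Real.exp t := by
    have single : y ^ t * 1 ^ (M - t) * (M.choose t : ℝ) ≤ (y + 1) ^ M := by
      rw [add_pow]
      refine Finset.single_le_sum (f := fun s => y ^ s * 1 ^ (M - s) * (M.choose s : ℝ))
        (fun s _ => by positivity) (Finset.mem_range.mpr (by omega))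
    have expb : (y + 1) ^ M ≤ Real.exp t := by
      calc (y + 1) ^ M ≤ Real.exp y ^ M :=
            pow_le_pow_left₀ (by positivity) (Real.add_one_le_exp y) M
        _ = Real.exp (M * y) := (Real.exp_nat_mul y M).symm
        _ = Real.exp t := by
            congr 1
            rw [hy]; field_simp
    calc (M.choose t : ℝ) * y ^ t = y ^ t * 1 ^ (M - t) * (M.choose t : ℝ) := by ring
      _ ≤ (y + 1) ^ M := single
      _ ≤ Real.exp t := expb
  have hxy : x ^ t = y ^ t * (x / y) ^ t := by
    rw [← mul_pow]
    congr 1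
    field_simp
  calc (M.choose t : ℝ) * x ^ t = (M.choose t : ℝ) * y ^ t * (x / y) ^ t := by
        rw [hxy]; ring
    _ ≤ Real.exp t * (x / y) ^ t :=
        mul_le_mul_of_nonneg_right key (by positivity)
    _ = (Real.exp 1 * ((M : ℝ) * x) / t) ^ t := by
        rw [show Real.exp (t : ℝ) = Real.exp 1 ^ t by
          rw [← Real.exp_nat_mul]; norm_num]
        rw [← mul_pow]
        congr 1
        rw [hy]
        field_simp

lemma realBound (τ : ℝ) (hτ : 0 < τ) (M n : ℕ) (q sa : ℝ)
    (hq0 : 0 < q) (hsa0 : 0 < sa) (hsa1 : sa ≤ 1)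
    (hL : 2 * (1 + τ) ≤ Real.log (1 / q))
    (hmean : 2 * Real.log n / (τ * Real.log (1 / q)) ≤ (M : ℝ) * q * sa ^ 2)
    (hn : 1 ≤ n) :
    (n : ℝ) ^ 2 * ((M.choose (Nat.floor ((1 + τ) * ((M : ℝ) * q * sa ^ 2)) + 1) : ℝ) *
        (q ^ 2 * sa ^ 2) ^ (Nat.floor ((1 + τ) * ((M : ℝ) * q * sa ^ 2)) + 1))
      ≤ Real.exp (-(1 / τ) * Real.log n) := by
  set z : ℝ := (1 + τ) * ((M : ℝ) * q * sa ^ 2) with hzdef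
  set t : ℕ := Nat.floor z + 1 with htdef
  set L : ℝ := Real.log (1 / q) with hLdef
  have hL0 : (0:ℝ) < L := lt_of_lt_of_le (by positivity) hL
  have hτne : τ ≠ 0 := ne_of_gt hτ
  have hLne : L ≠ 0 := ne_of_gt hL0
  have hz0 : 0 ≤ z := by positivity
  have hzt : z < t := by
    have := Nat.lt_floor_add_one z
    push_cast [htdef]
    exact_mod_cast this
  have ht1 : 1 ≤ t := by omega
  have htpos : (0:ℝ) < t := by exact_mod_cast ht1
  have hlogn : 0 ≤ Real.log n := Real.log_natCast_nonneg n
  have hnpos : (0:ℝ) < n := by exact_mod_cast hn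
  have hzlow : 2 * (1 + τ) * Real.log n / (τ * L) ≤ z := by
    rw [hzdef]
    calc 2 * (1 + τ) * Real.log n / (τ * L)
        = (1 + τ) * (2 * Real.log n / (τ * L)) := by ring
      _ ≤ (1 + τ) * ((M : ℝ) * q * sa ^ 2) :=
          mul_le_mul_of_nonneg_left hmean (by positivity)
  have hx0 : (0:ℝ) ≤ q ^ 2 * sa ^ 2 := by positivity
  have step1 : (M.choose t : ℝ) * (q ^ 2 * sa ^ 2) ^ t ≤ (Real.exp 1 * q) ^ t := by
    refine le_trans (chooseBound M t _ hx0 ht1) ?_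
    have hbase : Real.exp 1 * ((M : ℝ) * (q ^ 2 * sa ^ 2)) / t ≤ Real.exp 1 * q := by
      have hMx : (M : ℝ) * (q ^ 2 * sa ^ 2) = q * z / (1 + τ) := by
        rw [hzdef]; field_simp
      rw [hMx, div_le_iff₀ htpos]
      have h1 : q * z / (1 + τ) ≤ q * t :=
        le_trans (div_le_self (by positivity) (by linarith))
          (mul_le_mul_of_nonneg_left (le_of_lt hzt) (le_of_lt hq0))
      calc Real.exp 1 * (q * z / (1 + τ))
          ≤ Real.exp 1 * (q * t) := mul_le_mul_of_nonneg_left h1 (Real.exp_pos 1).le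
        _ = Real.exp 1 * q * t := by ring
    exact pow_le_pow_left₀ (by positivity) hbase t
  have step3 : (Real.exp 1 * q) ^ t ≤ Real.exp (-(2 + 1 / τ) * Real.log n) := by
    have hLq : L = -Real.log q := by rw [hLdef, one_div, Real.log_inv]
    have heq : Real.exp 1 * q = Real.exp (1 - L) := by
      rw [hLq, show (1 : ℝ) - -Real.log q = 1 + Real.log q by ring, Real.exp_add,
        Real.exp_log hq0]
    rw [heq, ← Real.exp_nat_mul, Real.exp_le_exp]
    have hL1 : (1:ℝ) ≤ L := by nlinarith
    have h1 : (t : ℝ) * (1 - L) ≤ z * (1 - L) :=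
      mul_le_mul_of_nonpos_right (le_of_lt hzt) (by linarith)
    refine le_trans h1 ?_
    have h2 : (2 + 1 / τ) * Real.log n ≤ z * (L - 1) := by
      calc (2 + 1 / τ) * Real.log n
          = ((2 * τ + 1) * L) * Real.log n / (τ * L) := by
            field_simp
        _ ≤ (2 * (1 + τ) * (L - 1)) * Real.log n / (τ * L) := by
            refine div_le_div_of_nonneg_right ?_ (by positivity)
            exact mul_le_mul_of_nonneg_right (by nlinarith) hlogn
        _ = (2 * (1 + τ) * Real.log n / (τ * L)) * (L - 1) := by ring
        _ ≤ z * (L - 1) := mul_le_mul_of_nonneg_right hzlow (by linarith)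
    linarith
  have hn2 : (n:ℝ) ^ 2 = Real.exp (2 * Real.log n) := by
    rw [show (2:ℝ) * Real.log n = ((2:ℕ):ℝ) * Real.log n by norm_num, ← Real.log_pow,
      Real.exp_log (by positivity)]
  calc (n : ℝ) ^ 2 * ((M.choose t : ℝ) * (q ^ 2 * sa ^ 2) ^ t)
      ≤ (n : ℝ) ^ 2 * Real.exp (-(2 + 1 / τ) * Real.log n) :=
        mul_le_mul_of_nonneg_left (le_trans step1 step3) (by positivity)
    _ = Real.exp (-(1 / τ) * Real.log n) := by
        rw [hn2, ← Real.exp_add]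
        congr 1
        ring

lemma ennrealConv (n M t : ℕ) (q sa : ℝ) (hq0 : 0 ≤ q) (hsa0 : 0 ≤ sa) :
    (n : ENNReal) ^ 2 * ((M.choose t : ENNReal) *
        (ENNReal.ofReal q * ENNReal.ofReal q * (ENNReal.ofReal sa * ENNReal.ofReal sa)) ^ t)
      = ENNReal.ofReal ((n : ℝ) ^ 2 * ((M.choose t : ℝ) * (q ^ 2 * sa ^ 2) ^ t)) := by
  rw [← ENNReal.ofReal_natCast n, ← ENNReal.ofReal_natCast (M.choose t),
    ← ENNReal.ofReal_mul hq0, ← ENNReal.ofReal_mul hsa0,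
    ← ENNReal.ofReal_mul (by positivity), ← ENNReal.ofReal_pow (by positivity),
    ← ENNReal.ofReal_pow (by positivity), ← ENNReal.ofReal_mul (by positivity),
    ← ENNReal.ofReal_mul (by positivity)]
  congr 1
  ring


end AttrAlign

open AttrAlign

/-- Under the attributed Erdős–Rényi graph pair model with `q = o(1)`, `s_a = Θ(1)`
and `m q s_a² ≥ 2 log n / (τ log(1/q))` for a constant `τ > 0`, the anchor set
`S₂ = {(i,j) : C_ij > z}` with `z = (1+τ) m q s_a²` contains, with probability tending
to `1`, only correct pairs `(i, Π*(i))`; in particular, with probability tending to `1`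
no two distinct pairs in `S₂` share a coordinate. -/
theorem anchors_attrSparse_all_correct
    (p q su sa : ℕ → ℝ) (m : ℕ → ℕ) (τ : ℝ)
    (hp01 : ∀ n, 0 ≤ p n ∧ p n ≤ 1) (hq01 : ∀ n, 0 < q n ∧ q n < 1)
    (hsu01 : ∀ n, 0 ≤ su n ∧ su n ≤ 1) (hsa01 : ∀ n, 0 < sa n ∧ sa n ≤ 1)
    (hq : Tendsto q atTop (nhds 0))
    (hsa : ∃ c > 0, ∀ᶠ n : ℕ in atTop, c ≤ sa n)
    (hτ : 0 < τ)
    (hmean : ∀ n : ℕ,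
      2 * Real.log n / (τ * Real.log (1 / q n)) ≤ (m n : ℝ) * q n * (sa n) ^ 2) :
    Tendsto (fun n =>
        attrMeasure n (m n) (p n) (q n) (su n) (sa n)
          {ω : Config n (m n) | ∀ i j : Fin n,
            (1 + τ) * ((m n : ℝ) * q n * (sa n) ^ 2) < (CC ω i j : ℝ) →
              j = pstar ω i})
      atTop (nhds 1) ∧
    Tendsto (fun n =>
        attrMeasure n (m n) (p n) (q n) (su n) (sa n)
          {ω : Config n (m n) |
            noConflict (anchors ((1 + τ) * ((m n : ℝ) * q n * (sa n) ^ 2)) ω)})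
      atTop (nhds 1) := by
  classical
  have hbadle : ∀ n : ℕ,
      attrMeasure n (m n) (p n) (q n) (su n) (sa n)
        ({ω : Config n (m n) | ∀ i j : Fin n,
          (1 + τ) * ((m n : ℝ) * q n * (sa n) ^ 2) < (CC ω i j : ℝ) → j = pstar ω i}ᶜ)
      ≤ ENNReal.ofReal ((n : ℝ) ^ 2 *
          (((m n).choose (Nat.floor ((1 + τ) * ((m n : ℝ) * q n * (sa n) ^ 2)) + 1) : ℝ) *
            ((q n) ^ 2 * (sa n) ^ 2) ^
              (Nat.floor ((1 + τ) * ((m n : ℝ) * q n * (sa n) ^ 2)) + 1))) := by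
    intro n
    obtain ⟨hq0, hq1⟩ := hq01 n
    obtain ⟨hsa0, hsa1⟩ := hsa01 n
    have hz0 : 0 ≤ (1 + τ) * ((m n : ℝ) * q n * (sa n) ^ 2) := by positivity
    refine le_trans (measure_mono ?_) (le_trans
      (bad_bound (p n) (q n) (su n) (sa n) hq0.le hq1.le hsa0.le hsa1 _)
      (le_of_eq (ennrealConv n (m n) _ (q n) (sa n) hq0.le hsa0.le)))
    intro ω hω
    exact compl_sub (q n) (su n) (sa n) _ hz0 ω hω
  have hupper : ∀ᶠ n : ℕ in atTop,
      attrMeasure n (m n) (p n) (q n) (su n) (sa n)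
        ({ω : Config n (m n) | ∀ i j : Fin n,
          (1 + τ) * ((m n : ℝ) * q n * (sa n) ^ 2) < (CC ω i j : ℝ) → j = pstar ω i}ᶜ)
      ≤ ENNReal.ofReal (Real.exp (-(1 / τ) * Real.log n)) := by
    have hev1 : ∀ᶠ n : ℕ in atTop, q n < Real.exp (-(2 * (1 + τ))) :=
      hq.eventually_lt_const (Real.exp_pos _)
    filter_upwards [hev1, eventually_ge_atTop 1] with n hqn hn1
    obtain ⟨hq0, hq1⟩ := hq01 n
    obtain ⟨hsa0, hsa1⟩ := hsa01 n
    have hL : 2 * (1 + τ) ≤ Real.log (1 / q n) := by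
      rw [one_div, Real.log_inv]
      have h := Real.log_lt_log hq0 hqn
      rw [Real.log_exp] at h
      linarith
    exact le_trans (hbadle n) (ENNReal.ofReal_le_ofReal
      (realBound τ hτ (m n) n (q n) (sa n) hq0 hsa0 hsa1 hL (hmean n) hn1))
  have hbad0 : Tendsto (fun n : ℕ =>
      attrMeasure n (m n) (p n) (q n) (su n) (sa n)
        ({ω : Config n (m n) | ∀ i j : Fin n,
          (1 + τ) * ((m n : ℝ) * q n * (sa n) ^ 2) < (CC ω i j : ℝ) → j = pstar ω i}ᶜ))
      atTop (nhds 0) := by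
    have hre : Tendsto (fun n : ℕ => Real.exp (-(1 / τ) * Real.log n)) atTop (nhds 0) := by
      apply Real.tendsto_exp_atBot.comp
      have hlog : Tendsto (fun n : ℕ => Real.log n) atTop atTop :=
        Real.tendsto_log_atTop.comp tendsto_natCast_atTop_atTop
      have : -(1 / τ) < 0 := by
        have : (0:ℝ) < 1 / τ := by positivity
        linarith
      exact (tendsto_const_mul_atBot_of_neg this).mpr hlog
    have hup : Tendsto (fun n : ℕ => ENNReal.ofReal (Real.exp (-(1 / τ) * Real.log n)))
        atTop (nhds 0) := by
      simpa using ENNReal.tendsto_ofReal hre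
    exact tendsto_of_tendsto_of_tendsto_of_le_of_le' tendsto_const_nhds hup
      (Eventually.of_forall fun n => zero_le) hupper
  have H1 : Tendsto (fun n =>
      attrMeasure n (m n) (p n) (q n) (su n) (sa n)
        {ω : Config n (m n) | ∀ i j : Fin n,
          (1 + τ) * ((m n : ℝ) * q n * (sa n) ^ 2) < (CC ω i j : ℝ) → j = pstar ω i})
      atTop (nhds 1) := by
    have heq : ∀ n : ℕ,
        attrMeasure n (m n) (p n) (q n) (su n) (sa n)
          {ω : Config n (m n) | ∀ i j : Fin n,
            (1 + τ) * ((m n : ℝ) * q n * (sa n) ^ 2) < (CC ω i j : ℝ) → j = pstar ω i}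
        = 1 - attrMeasure n (m n) (p n) (q n) (su n) (sa n)
          ({ω : Config n (m n) | ∀ i j : Fin n,
            (1 + τ) * ((m n : ℝ) * q n * (sa n) ^ 2) < (CC ω i j : ℝ) → j = pstar ω i}ᶜ) := by
      intro n
      rw [measure_compl (meas_all _) (measure_ne_top _ _), measure_univ,
        ENNReal.sub_sub_cancel ENNReal.one_ne_top prob_le_one]
    rw [show (fun n =>
        attrMeasure n (m n) (p n) (q n) (su n) (sa n)
          {ω : Config n (m n) | ∀ i j : Fin n,
            (1 + τ) * ((m n : ℝ) * q n * (sa n) ^ 2) < (CC ω i j : ℝ) → j = pstar ω i})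
      = fun n => 1 - attrMeasure n (m n) (p n) (q n) (su n) (sa n)
          ({ω : Config n (m n) | ∀ i j : Fin n,
            (1 + τ) * ((m n : ℝ) * q n * (sa n) ^ 2) < (CC ω i j : ℝ) → j = pstar ω i}ᶜ)
      from funext heq]
    have := ENNReal.Tendsto.sub (tendsto_const_nhds (x := (1 : ENNReal)) (f := atTop))
      hbad0 (Or.inl ENNReal.one_ne_top)
    simpa using this
  refine ⟨H1, ?_⟩
  have hincl : ∀ (n : ℕ) (ω : Config n (m n)),
      (∀ i j : Fin n, (1 + τ) * ((m n : ℝ) * q n * (sa n) ^ 2) < (CC ω i j : ℝ) →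
        j = pstar ω i) →
      noConflict (anchors ((1 + τ) * ((m n : ℝ) * q n * (sa n) ^ 2)) ω) := by
    intro n ω hω a ha b hb hor
    have ha2 : a.2 = pstar ω a.1 := hω a.1 a.2 (Finset.mem_filter.mp ha).2
    have hb2 : b.2 = pstar ω b.1 := hω b.1 b.2 (Finset.mem_filter.mp hb).2
    rcases hor with h | h
    · exact Prod.ext h (by rw [ha2, hb2, h])
    · have h1 : a.1 = b.1 := (pstar ω).injective (by rw [← ha2, ← hb2]; exact h)
      exact Prod.ext h1 (by rw [ha2, hb2, h1])
  refine tendsto_of_tendsto_of_tendsto_of_le_of_le H1 tendsto_const_nhds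
    (fun n => measure_mono ?_) (fun n => prob_le_one)
  intro ω hω
  exact hincl n ω hω
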